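/- Let D be a domain with quotient field K and let S be a torsion-free monoid with quotient group G. Then: (1) D is S-UMT if and only if D is G-UMT; (2) S is D-UMT if and only if S is K-UMT. -/

import Mathlib

/-! ### Basic notions for monoids, monoid algebras and domains -/

/-- A monoid `S` (written additively) is torsion-free if `n • x = n • y` implies `x = y`
for all integers `n ≥ 1`. -/
def AddTorsionFree (S : Type*) [AddCommMonoid S] : Prop :=
  ∀ n : ℕ, n ≠ 0 → ∀ x y : S, n • x = n • y → x = y

/-- An ideal of an additive monoid `S` is a nonempty subset `P` with `P + S ⊆ P`. -/
def IsMonoidIdeal {S : Type*} [AddCommMonoid S] (P : Set S) : Prop :=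
  P.Nonempty ∧ ∀ p ∈ P, ∀ s : S, p + s ∈ P

/-- An ideal `P` of an additive monoid `S` is prime if `P ≠ S` and
`s + t ∈ P` implies `s ∈ P` or `t ∈ P`. -/
def IsMonoidPrimeIdeal {S : Type*} [AddCommMonoid S] (P : Set S) : Prop :=
  IsMonoidIdeal P ∧ P ≠ Set.univ ∧ ∀ s t : S, s + t ∈ P → s ∈ P ∨ t ∈ P

/-- `P ∈ 𝔛(S)`: `P` is a minimal nonempty prime ideal of the monoid `S`. -/
def IsMinMonoidPrime {S : Type*} [AddCommMonoid S] (P : Set S) : Prop :=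
  IsMonoidPrimeIdeal P ∧ ∀ Q : Set S, IsMonoidPrimeIdeal Q → Q ⊆ P → Q = P

/-- `P ∈ 𝔛(R)`: `P` is a height-one prime ideal of `R`, i.e. a nonzero prime ideal
that is minimal among the nonzero prime ideals. -/
def IsHeightOnePrime {R : Type*} [CommRing R] (P : Ideal R) : Prop :=
  P.IsPrime ∧ P ≠ ⊥ ∧ ∀ Q : Ideal R, Q.IsPrime → Q < P → Q = ⊥

/-- `D[P]` for a subset `P ⊆ S`: the set of elements of the monoid algebra `D[S]`
all of whose exponents lie in `P`. -/
def expIn (D : Type*) {S : Type*} [CommRing D] [AddCommMonoid S] (P : Set S) :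
    Set (AddMonoidAlgebra D S) :=
  {f | ∀ s ∈ f.coeff.support, s ∈ P}

/-- `I[S]` for an ideal `I` of `D`: the set of elements of the monoid algebra `D[S]`
all of whose coefficients lie in `I`. -/
def coeffIn {D : Type*} (S : Type*) [CommRing D] [AddCommMonoid S] (I : Ideal D) :
    Set (AddMonoidAlgebra D S) :=
  {f | ∀ s : S, f.coeff s ∈ I}

/-- `φ : S →+ G` realizes `G` as the quotient (Grothendieck) group of `S`:
`φ` is injective and every element of `G` is a difference of elements of `φ(S)`. -/
def IsQuotientGroup {S G : Type*} [AddCommMonoid S] [AddCommGroup G] (φ : S →+ G) : Prop :=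
  Function.Injective φ ∧ ∀ g : G, ∃ s t : S, g = φ s - φ t

/-- A subgroup is cyclic if it is generated by a single element. -/
def IsCyclicAddSubgroup {G : Type*} [AddCommGroup G] (H : AddSubgroup G) : Prop :=
  ∃ g : G, H = AddSubgroup.closure {g}

/-- `G` satisfies the ACC on cyclic subgroups: every ascending chain of cyclic
subgroups of `G` stabilizes. -/
def ACCOnCyclicSubgroups (G : Type*) [AddCommGroup G] : Prop :=
  ∀ c : ℕ →o AddSubgroup G, (∀ n, IsCyclicAddSubgroup (c n)) →
    ∃ N, ∀ n, N ≤ n → c n = c N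

/-- `D` is `S`-UMT: `P[S] ∈ 𝔛(D[S])` for every `P ∈ 𝔛(D)`. -/
def IsDomainUMT (D S : Type*) [CommRing D] [AddCommMonoid S] : Prop :=
  ∀ P : Ideal D, IsHeightOnePrime P →
    ∃ Q : Ideal (AddMonoidAlgebra D S), (Q : Set (AddMonoidAlgebra D S)) = coeffIn S P ∧
      IsHeightOnePrime Q

/-- `S` is `D`-UMT: `D[P] ∈ 𝔛(D[S])` for every `P ∈ 𝔛(S)`. -/
def IsMonoidUMT (D S : Type*) [CommRing D] [AddCommMonoid S] : Prop :=
  ∀ P : Set S, IsMinMonoidPrime P →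
    ∃ Q : Ideal (AddMonoidAlgebra D S), (Q : Set (AddMonoidAlgebra D S)) = expIn D P ∧
      IsHeightOnePrime Q

/-- The localization `R_P` of `R` at a prime ideal `P`, as a subset of the fraction
field of `R`. -/
def locAt {R : Type*} [CommRing R] (P : Ideal R) : Set (FractionRing R) :=
  {x | ∃ a b : R, b ∉ P ∧
    x * algebraMap R (FractionRing R) b = algebraMap R (FractionRing R) a}

/-- A domain `R` is weakly Krull if `R = ⋂_{P ∈ 𝔛(R)} R_P` inside its quotient field and
every nonzero nonunit of `R` lies in only finitely many height-one primes. -/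
def IsWeaklyKrullDomain (R : Type*) [CommRing R] : Prop :=
  (∀ x : FractionRing R, (∀ P : Ideal R, IsHeightOnePrime P → x ∈ locAt P) →
      ∃ r : R, x = algebraMap R (FractionRing R) r) ∧
  ∀ r : R, r ≠ 0 → ¬IsUnit r → {P : Ideal R | IsHeightOnePrime P ∧ r ∈ P}.Finite

/-- The localization `S_P = {s - t : s ∈ S, t ∈ S ∖ P}` of the monoid `S` at `P`,
inside the quotient group of `S` realized by `φ`. -/
def monLocAt {S G : Type*} [AddCommMonoid S] [AddCommGroup G] (φ : S →+ G) (P : Set S) :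
    Set G :=
  {g | ∃ s t : S, t ∉ P ∧ g = φ s - φ t}

/-- A monoid `S` is weakly Krull if `S = ⋂_{P ∈ 𝔛(S)} S_P` inside its quotient group and
every nonunit of `S` lies in only finitely many minimal nonempty primes. -/
def IsWeaklyKrullMonoid {S G : Type*} [AddCommMonoid S] [AddCommGroup G] (φ : S →+ G) :
    Prop :=
  (∀ g : G, (∀ P : Set S, IsMinMonoidPrime P → g ∈ monLocAt φ P) → ∃ s : S, g = φ s) ∧
  ∀ s : S, ¬IsAddUnit s → {P : Set S | IsMinMonoidPrime P ∧ s ∈ P}.Finite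

/-- A Krull domain: a weakly Krull domain each of whose localizations at height-one
primes is a discrete rank-one valuation ring, i.e. the ring of nonnegative elements of a
`ℤ`-valued valuation on the quotient field. -/
def IsKrullDomain (R : Type*) [CommRing R] : Prop :=
  IsWeaklyKrullDomain R ∧
  ∀ P : Ideal R, IsHeightOnePrime P →
    ∃ v : (FractionRing R)ˣ →* Multiplicative ℤ,
      ∀ x : (FractionRing R)ˣ, ((x : FractionRing R) ∈ locAt P ↔ 0 ≤ Multiplicative.toAdd (v x))

/-- A Krull monoid: a weakly Krull monoid such that for each `P ∈ 𝔛(S)` there is a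
group homomorphism `v : q(S) → ℤ` with `S_P = {x : v x ≥ 0}`. -/
def IsKrullMonoid {S G : Type*} [AddCommMonoid S] [AddCommGroup G] (φ : S →+ G) : Prop :=
  IsWeaklyKrullMonoid φ ∧
  ∀ P : Set S, IsMinMonoidPrime P →
    ∃ v : G →+ ℤ, ∀ g : G, g ∈ monLocAt φ P ↔ 0 ≤ v g

/-- A generalized Krull domain: a weakly Krull domain each of whose localizations `R_P`
at height-one primes is a valuation domain: every `x` in the quotient field satisfies
`x ∈ R_P` or `x⁻¹ ∈ R_P`. -/
def IsGeneralizedKrullDomain (R : Type*) [CommRing R] : Prop :=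
  IsWeaklyKrullDomain R ∧
  ∀ P : Ideal R, IsHeightOnePrime P →
    ∀ x : FractionRing R, x ∈ locAt P ∨ ∃ y ∈ locAt P, x * y = 1

/-- A generalized Krull monoid: a weakly Krull monoid each of whose localizations `S_P`
at minimal primes is a valuation monoid of `q(S)`: `g ∈ S_P` or `-g ∈ S_P` for all `g`. -/
def IsGeneralizedKrullMonoid {S G : Type*} [AddCommMonoid S] [AddCommGroup G]
    (φ : S →+ G) : Prop :=
  IsWeaklyKrullMonoid φ ∧
  ∀ P : Set S, IsMinMonoidPrime P → ∀ g : G, g ∈ monLocAt φ P ∨ -g ∈ monLocAt φ P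

/-! ### The `t`-operation and UMT-domains -/

/-- For a subset `A` of the quotient field of `R`, the set
`A⁻¹ = {x : x • A ⊆ R}` inside the quotient field. -/
def setInv {R : Type*} [CommRing R] (A : Set (FractionRing R)) : Set (FractionRing R) :=
  {x | ∀ a ∈ A, ∃ r : R, x * a = algebraMap R (FractionRing R) r}

/-- `I_v = (I⁻¹)⁻¹` for an ideal `I` of `R`, as a subset of the quotient field. -/
def idealV {R : Type*} [CommRing R] (I : Ideal R) : Set (FractionRing R) :=
  setInv (setInv (algebraMap R (FractionRing R) '' (I : Set R)))

/-- `I` is a `t`-ideal: `I_t = I`, i.e. `J_v ⊆ I` for every nonzero finitely generated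
ideal `J ⊆ I` (the inclusion `I ⊆ I_t` always holds). -/
def IsTIdeal {R : Type*} [CommRing R] (I : Ideal R) : Prop :=
  ∀ J : Ideal R, J ≤ I → J.FG → J ≠ ⊥ →
    idealV J ⊆ algebraMap R (FractionRing R) '' (I : Set R)

/-- A maximal `t`-ideal: an ideal maximal among proper `t`-ideals. -/
def IsMaximalTIdeal {R : Type*} [CommRing R] (I : Ideal R) : Prop :=
  I ≠ ⊤ ∧ IsTIdeal I ∧ ∀ J : Ideal R, J ≠ ⊤ → IsTIdeal J → I ≤ J → I = J

/-- A UMT-domain: every (nonzero) prime ideal of `D[X]` contracting to `(0)` in `D`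
(an "upper to zero") is a maximal `t`-ideal of `D[X]`. -/
def IsUMTDomain (D : Type*) [CommRing D] : Prop :=
  ∀ Q : Ideal (Polynomial D), Q.IsPrime → Q ≠ ⊥ →
    Q.comap (Polynomial.C : D →+* Polynomial D) = ⊥ → IsMaximalTIdeal Q

/-! ### GCD, primary elements, weak factoriality -/

/-- A GCD-domain: any two nonzero elements have a greatest common divisor. -/
def IsGCDDomain (R : Type*) [CommRing R] : Prop :=
  ∀ a b : R, a ≠ 0 → b ≠ 0 →
    ∃ d : R, d ∣ a ∧ d ∣ b ∧ ∀ e : R, e ∣ a → e ∣ b → e ∣ d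

/-- Divisibility in an additive monoid: `a ∣ b ↔ b ∈ a + S`. -/
def AddDvd {S : Type*} [AddCommMonoid S] (a b : S) : Prop := ∃ c : S, b = a + c

/-- A GCD-monoid: any two elements have a greatest common divisor with respect to
the divisibility preorder. -/
def IsGCDAddMonoid (S : Type*) [AddCommMonoid S] : Prop :=
  ∀ a b : S, ∃ d : S, AddDvd d a ∧ AddDvd d b ∧ ∀ e : S, AddDvd e a → AddDvd e b → AddDvd e d

/-- A primary element of a ring: the principal ideal it generates is primary. -/
def IsPrimaryElem {R : Type*} [CommRing R] (a : R) : Prop :=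
  (Ideal.span {a} : Ideal R).IsPrimary

/-- A weakly factorial domain: every nonzero nonunit is a finite product of
primary elements. -/
def IsWeaklyFactorialDomain (R : Type*) [CommRing R] : Prop :=
  ∀ a : R, a ≠ 0 → ¬IsUnit a →
    ∃ l : List R, (∀ b ∈ l, IsPrimaryElem b) ∧ a = l.prod

/-- A primary ideal of an additive monoid: an ideal `Q ≠ S` such that `s + t ∈ Q`
with `s ∉ Q` implies `n • t ∈ Q` for some `n ≥ 1`. -/
def IsMonoidPrimaryIdeal {S : Type*} [AddCommMonoid S] (Q : Set S) : Prop :=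
  IsMonoidIdeal Q ∧ Q ≠ Set.univ ∧
    ∀ s t : S, s + t ∈ Q → s ∉ Q → ∃ n : ℕ, 1 ≤ n ∧ n • t ∈ Q

/-- A primary element of an additive monoid: the ideal `a + S` is primary. -/
def IsMonoidPrimaryElem {S : Type*} [AddCommMonoid S] (a : S) : Prop :=
  IsMonoidPrimaryIdeal {x : S | ∃ s : S, x = a + s}

/-- A weakly factorial monoid: every nonunit is a finite sum of primary elements. -/
def IsWeaklyFactorialMonoid (S : Type*) [AddCommMonoid S] : Prop :=
  ∀ a : S, ¬IsAddUnit a →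
    ∃ l : List S, (∀ b ∈ l, IsMonoidPrimaryElem b) ∧ a = l.sum

/-! ### The canonical inclusions `D[S] → K[S]` and `D[S] → D[G]` -/

/-- The canonical inclusion `D[S] → K[S]`, where `K` is the fraction field of `D`,
applying `D → K` to all coefficients. -/
noncomputable def coeffEmbed (D S : Type*) [CommRing D] [IsDomain D] [AddCommMonoid S] :
    AddMonoidAlgebra D S →+* AddMonoidAlgebra (FractionRing D) S :=
  AddMonoidAlgebra.liftNCRingHom
    ((AddMonoidAlgebra.singleZeroRingHom).comp (algebraMap D (FractionRing D)))
    (AddMonoidAlgebra.of (FractionRing D) S) (fun {_ _} => Commute.all _ _)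

/-- The canonical inclusion `D[S] → D[G]`, where `G` is the quotient group of `S`
realized by `φ`, applying `φ` to all exponents. -/
noncomputable def expEmbed (D : Type*) {S G : Type*} [CommRing D] [AddCommMonoid S]
    [AddCommGroup G] (φ : S →+ G) : AddMonoidAlgebra D S →+* AddMonoidAlgebra D G :=
  AddMonoidAlgebra.mapDomainRingHom D φ




section LocTransfer

variable {R R' : Type*} [CommRing R] [CommRing R'] (f : R →+* R')

theorem aux_le_of_comap_le
    (hsurj : ∀ x : R', ∃ r : R, ∃ m : R, IsUnit (f m) ∧ x * f m = f r)
    {I J : Ideal R'} (h : I.comap f ≤ J.comap f) : I ≤ J := by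
  intro x hx
  obtain ⟨r, m, hm, hxm⟩ := hsurj x
  have hr : r ∈ I.comap f := by
    simp only [Ideal.mem_comap, ← hxm]
    exact I.mul_mem_right _ hx
  have hrJ : f r ∈ J := h hr
  obtain ⟨v, hv⟩ := hm
  have hx' : x = f r * ↑v⁻¹ := by
    rw [← hxm, ← hv, mul_assoc, v.mul_inv, mul_one]
  rw [hx']
  exact J.mul_mem_right _ hrJ

theorem aux_eq_bot (hinj : Function.Injective f)
    (hsurj : ∀ x : R', ∃ r : R, ∃ m : R, IsUnit (f m) ∧ x * f m = f r)
    {I : Ideal R'} (h : I.comap f = ⊥) : I = ⊥ := by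
  refine le_bot_iff.mp (aux_le_of_comap_le f hsurj ?_)
  rw [h, ← RingHom.ker_eq_comap_bot, (RingHom.injective_iff_ker_eq_bot f).mp hinj]

theorem aux_exists_prime_comap (hinj : Function.Injective f)
    (hsurj : ∀ x : R', ∃ r : R, ∃ m : R, IsUnit (f m) ∧ x * f m = f r)
    (Q₀ : Ideal R) (hQ₀ : Q₀.IsPrime)
    (hd : ∀ m : R, IsUnit (f m) → m ∉ Q₀) :
    ∃ Q₀' : Ideal R', Q₀'.IsPrime ∧ Q₀'.comap f = Q₀ := by
  classical
  refine ⟨{ carrier := {x | ∃ r ∈ Q₀, ∃ m : R, IsUnit (f m) ∧ x * f m = f r}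
            zero_mem' := ⟨0, Q₀.zero_mem, 1, by simpa using isUnit_one, by simp⟩
            add_mem' := ?_
            smul_mem' := ?_ }, ⟨?_, ?_⟩, ?_⟩
  · rintro x y ⟨r, hr, m, hm, e⟩ ⟨s, hs, n, hn, e'⟩
    refine ⟨r * n + s * m, Ideal.add_mem _ (Q₀.mul_mem_right _ hr) (Q₀.mul_mem_right _ hs),
      m * n, by simpa [map_mul] using hm.mul hn, ?_⟩
    rw [map_mul, map_add, map_mul, map_mul]
    calc (x + y) * (f m * f n) = (x * f m) * f n + (y * f n) * f m := by ring
    _ = f r * f n + f s * f m := by rw [e, e']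
  · rintro a x ⟨r, hr, m, hm, e⟩
    obtain ⟨b, n, hn, ea⟩ := hsurj a
    refine ⟨b * r, Q₀.mul_mem_left _ hr, n * m, by simpa [map_mul] using hn.mul hm, ?_⟩
    rw [map_mul, map_mul, smul_eq_mul]
    calc a * x * (f n * f m) = (a * f n) * (x * f m) := by ring
    _ = f b * f r := by rw [ea, e]
  · -- ne_top
    intro htop
    have h1 : ∃ r ∈ Q₀, ∃ m : R, IsUnit (f m) ∧ (1 : R') * f m = f r := by
      have : (1 : R') ∈ (⊤ : Ideal R') := Submodule.mem_top
      rw [← htop] at this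
      exact this
    obtain ⟨r, hr, m, hm, e⟩ := h1
    rw [one_mul] at e
    exact hd m hm (hinj e ▸ hr)
  · -- mem_or_mem
    rintro x y ⟨r, hr, m, hm, e⟩
    obtain ⟨a, n, hn, ex⟩ := hsurj x
    obtain ⟨b, k, hk, ey⟩ := hsurj y
    have key : f (a * b * m) = f (r * (n * k)) := by
      rw [map_mul, map_mul, map_mul, map_mul, ← ex, ← ey]
      calc x * f n * (y * f k) * f m = (x * y * f m) * (f n * f k) := by ring
      _ = f r * (f n * f k) := by rw [e]
    have hab : a * b * m ∈ Q₀ := hinj key ▸ (Q₀.mul_mem_right _ hr)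
    have : a * b ∈ Q₀ := ((Ideal.IsPrime.mem_or_mem hQ₀ hab).resolve_right (hd m hm))
    rcases Ideal.IsPrime.mem_or_mem hQ₀ this with ha | hb
    · exact Or.inl ⟨a, ha, n, hn, ex⟩
    · exact Or.inr ⟨b, hb, k, hk, ey⟩
  · -- comap = Q₀
    ext c
    simp only [Ideal.mem_comap]
    constructor
    · rintro ⟨r, hr, m, hm, e⟩
      rw [← map_mul] at e
      have : c * m ∈ Q₀ := hinj e ▸ hr
      exact (hQ₀.mem_or_mem this).resolve_right (hd m hm)
    · intro hc
      exact ⟨c, hc, 1, by simpa using isUnit_one, by simp⟩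

theorem aux_heightOne_iff (hinj : Function.Injective f)
    (hsurj : ∀ x : R', ∃ r : R, ∃ m : R, IsUnit (f m) ∧ x * f m = f r)
    (Q : Ideal R) (Q' : Ideal R')
    (hc : Q'.comap f = Q) (hQp : Q.IsPrime) (hQ'p : Q'.IsPrime)
    (hQb : Q ≠ ⊥) (hQ'b : Q' ≠ ⊥) :
    IsHeightOnePrime Q ↔ IsHeightOnePrime Q' := by
  have hdisj : ∀ Q₀ : Ideal R, Q₀.IsPrime → Q₀ ≤ Q → ∀ m : R, IsUnit (f m) → m ∉ Q₀ := by
    intro Q₀ hQ₀ hle m hm hmem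
    have : f m ∈ Q' := by
      have := hle hmem
      rw [← hc] at this
      exact this
    exact hQ'p.ne_top (Ideal.eq_top_of_isUnit_mem _ this hm)
  constructor
  · rintro ⟨-, -, hmin⟩
    refine ⟨hQ'p, hQ'b, fun Q₀' hQ₀'p hlt => ?_⟩
    have hQ₀p : (Q₀'.comap f).IsPrime := Ideal.IsPrime.comap f (hK := hQ₀'p)
    have hle : Q₀'.comap f ≤ Q := hc ▸ Ideal.comap_mono hlt.le
    have hne : Q₀'.comap f ≠ Q := by
      intro heq
      have h1 : Q₀' ≤ Q' := aux_le_of_comap_le f hsurj (by rw [heq, hc])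
      have h2 : Q' ≤ Q₀' := aux_le_of_comap_le f hsurj (by rw [heq, hc])
      exact hlt.ne (le_antisymm h1 h2)
    have : Q₀'.comap f = ⊥ := hmin _ hQ₀p (lt_of_le_of_ne hle hne)
    exact aux_eq_bot f hinj hsurj this
  · rintro ⟨-, -, hmin⟩
    refine ⟨hQp, hQb, fun Q₀ hQ₀p hlt => ?_⟩
    obtain ⟨Q₀', hQ₀'p, hcomap⟩ := aux_exists_prime_comap f hinj hsurj Q₀ hQ₀p
      (fun m hm hmem => hdisj Q₀ hQ₀p hlt.le m hm hmem)
    have hle : Q₀' ≤ Q' := aux_le_of_comap_le f hsurj (by rw [hcomap, hc]; exact hlt.le)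
    have hne : Q₀' ≠ Q' := by
      intro heq
      exact hlt.ne (by rw [← hcomap, heq, hc])
    have : Q₀' = ⊥ := hmin _ hQ₀'p (lt_of_le_of_ne hle hne)
    rw [← hcomap, this, ← RingHom.ker_eq_comap_bot,
      (RingHom.injective_iff_ker_eq_bot f).mp hinj]

end LocTransfer


theorem uniqueSums_of_torsionfree {G : Type*} [AddCommGroup G]
    (h : ∀ n : ℕ, n ≠ 0 → ∀ g : G, n • g = 0 → g = 0) : UniqueSums G := by
  let Z0 := nonZeroDivisors ℤ
  let M := LocalizedModule Z0 G
  let e : ℚ ≃+* Localization Z0 :=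
    (IsLocalization.algEquiv Z0 ℚ (Localization Z0)).toRingEquiv
  letI : Module ℚ M := Module.compHom M (e : ℚ →+* Localization Z0)
  haveI : TwoUniqueSums M := inferInstance
  let F : G →+ M :=
    { toFun := fun g => LocalizedModule.mk g 1
      map_zero' := LocalizedModule.zero_mk 1
      map_add' := fun g g' => by
        rw [LocalizedModule.mk_add_mk, one_smul, one_smul, mul_one] }
  refine UniqueSums.of_injective_addHom F.toAddHom ?_ inferInstance
  intro x y hxy
  have hxy' : LocalizedModule.mk x (1 : Z0) = LocalizedModule.mk y 1 := hxy
  rw [LocalizedModule.mk_eq] at hxy'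
  obtain ⟨u, hu⟩ := hxy'
  simp only [one_smul] at hu
  have hu' : (u : ℤ) • x = (u : ℤ) • y := hu
  have hne : (u : ℤ) ≠ 0 := nonZeroDivisors.coe_ne_zero u
  have habs : ((u : ℤ).natAbs : ℤ) • x = ((u : ℤ).natAbs : ℤ) • y := by
    rcases Int.natAbs_eq (u : ℤ) with he | he
    · rw [← he]; exact hu'
    · rw [he] at hu'; simpa using hu'
  rw [natCast_zsmul, natCast_zsmul] at habs
  have := h ((u : ℤ).natAbs) (Int.natAbs_ne_zero.mpr hne) (x - y)
    (by rw [smul_sub, habs, sub_self])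
  exact sub_eq_zero.mp this


open AddMonoidAlgebra in
theorem liftNC_eq_mapRange {D D' S : Type*} [CommRing D] [CommRing D'] [AddCommMonoid S]
    (g : D →+* D') (x : AddMonoidAlgebra D S) :
    AddMonoidAlgebra.liftNCRingHom (AddMonoidAlgebra.singleZeroRingHom.comp g)
      (AddMonoidAlgebra.of D' S) (fun {_ _} => Commute.all _ _) x
      = AddMonoidAlgebra.ofCoeff (Finsupp.mapRange g (map_zero g) x.coeff) := by
  induction x using AddMonoidAlgebra.induction_linear with
  | zero => simp
  | add f g' hf hg => rw [map_add, hf, hg, AddMonoidAlgebra.coeff_add,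
      Finsupp.mapRange_add (map_add g), AddMonoidAlgebra.ofCoeff_add]
  | single a b =>
    rw [AddMonoidAlgebra.coeff_single, Finsupp.mapRange_single, AddMonoidAlgebra.ofCoeff_single]
    show AddMonoidAlgebra.liftNC _ _ (AddMonoidAlgebra.single a b) = _
    rw [AddMonoidAlgebra.liftNC_single]
    show AddMonoidAlgebra.singleZeroRingHom (g b) * AddMonoidAlgebra.of D' S
      (Multiplicative.ofAdd a) = _
    show AddMonoidAlgebra.single 0 (g b) * AddMonoidAlgebra.single _ 1 = _
    rw [AddMonoidAlgebra.single_mul_single, zero_add, mul_one]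
    rfl

section Restrict
variable {S : Type*} [AddCommMonoid S]
variable (D : Type*) [CommRing D]

open scoped Classical in
/-- The exponent-killing monoid hom. -/
noncomputable def killMonoidHom (P : Set S) (h0 : (0 : S) ∉ P)
    (hP : ∀ s t : S, s + t ∈ P ↔ s ∈ P ∨ t ∈ P) :
    Multiplicative S →* AddMonoidAlgebra D S where
  toFun := fun s => if Multiplicative.toAdd s ∈ P then 0
        else AddMonoidAlgebra.single (Multiplicative.toAdd s) 1
  map_one' := by
    show (if (0 : S) ∈ P then (0 : AddMonoidAlgebra D S) else AddMonoidAlgebra.single 0 1) = 1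
    rw [if_neg h0]
    exact (AddMonoidAlgebra.one_def).symm
  map_mul' := fun s t => by
    show (if Multiplicative.toAdd s + Multiplicative.toAdd t ∈ P then (0 : AddMonoidAlgebra D S)
        else AddMonoidAlgebra.single (Multiplicative.toAdd s + Multiplicative.toAdd t) 1) = _
    by_cases hs : Multiplicative.toAdd s ∈ P
    · show _ = (if Multiplicative.toAdd s ∈ P then (0 : AddMonoidAlgebra D S) else _) * _
      rw [if_pos ((hP _ _).mpr (Or.inl hs)), if_pos hs, zero_mul]
    · by_cases ht : Multiplicative.toAdd t ∈ P
      · show _ = _ * (if Multiplicative.toAdd t ∈ P then (0 : AddMonoidAlgebra D S) else _)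
        rw [if_pos ((hP _ _).mpr (Or.inr ht)), if_pos ht, mul_zero]
      · show _ = (if Multiplicative.toAdd s ∈ P then (0 : AddMonoidAlgebra D S)
            else AddMonoidAlgebra.single (Multiplicative.toAdd s) 1) *
          (if Multiplicative.toAdd t ∈ P then (0 : AddMonoidAlgebra D S)
            else AddMonoidAlgebra.single (Multiplicative.toAdd t) 1)
        rw [if_neg (fun hc => (((hP _ _).mp hc).elim hs ht)), if_neg hs, if_neg ht,
          AddMonoidAlgebra.single_mul_single, mul_one]

/-- The "kill exponents in P" ring homomorphism. -/
noncomputable def restrictHom (P : Set S) (h0 : (0 : S) ∉ P)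
    (hP : ∀ s t : S, s + t ∈ P ↔ s ∈ P ∨ t ∈ P) :
    AddMonoidAlgebra D S →+* AddMonoidAlgebra D S :=
  AddMonoidAlgebra.liftNCRingHom AddMonoidAlgebra.singleZeroRingHom
    (killMonoidHom D P h0 hP) (fun {_ _} => Commute.all _ _)

open scoped Classical in
theorem restrictHom_apply (P : Set S) (h0 : (0 : S) ∉ P)
    (hP : ∀ s t : S, s + t ∈ P ↔ s ∈ P ∨ t ∈ P) (x : AddMonoidAlgebra D S) (u : S) :
    (restrictHom D P h0 hP x).coeff u = if u ∈ P then 0 else x.coeff u := by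
  classical
  induction x using AddMonoidAlgebra.induction_linear with
  | zero => simp
  | add f g hf hg =>
    rw [map_add, AddMonoidAlgebra.coeff_add, Finsupp.add_apply, hf, hg,
      AddMonoidAlgebra.coeff_add, Finsupp.add_apply]
    split_ifs <;> simp
  | single a b =>
    have h1 : restrictHom D P h0 hP (AddMonoidAlgebra.single a b)
        = AddMonoidAlgebra.single 0 b * (killMonoidHom D P h0 hP (Multiplicative.ofAdd a)) := by
      show (AddMonoidAlgebra.liftNC _ _) (AddMonoidAlgebra.single a b) = _
      rw [AddMonoidAlgebra.liftNC_single]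
      rfl
    have h2 : killMonoidHom D P h0 hP (Multiplicative.ofAdd a)
        = if a ∈ P then 0 else AddMonoidAlgebra.single a 1 := by
      show (if a ∈ P then (0 : AddMonoidAlgebra D S) else AddMonoidAlgebra.single a 1) = _
      split_ifs <;> rfl
    rw [h1, h2]
    by_cases ha : a ∈ P
    · rw [if_pos ha, mul_zero]
      rw [AddMonoidAlgebra.coeff_zero, Finsupp.coe_zero, Pi.zero_apply]
      split_ifs with hu
      · rfl
      · rw [AddMonoidAlgebra.coeff_single, Finsupp.single_apply, if_neg]
        intro hau; exact hu (hau ▸ ha)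
    · rw [if_neg ha, AddMonoidAlgebra.single_mul_single, zero_add, mul_one]
      split_ifs with hu
      · rw [AddMonoidAlgebra.coeff_single, Finsupp.single_apply, if_neg]
        intro hau; exact ha (hau ▸ hu)
      · rfl
end Restrict

theorem mul_single_one_eq_mapDomain {D S : Type*} [CommRing D] [AddCommMonoid S]
    (x : AddMonoidAlgebra D S) (c : S) :
    x * AddMonoidAlgebra.single c 1 = AddMonoidAlgebra.mapDomain (· + c) x := by
  induction x using AddMonoidAlgebra.induction_linear with
  | zero => simp
  | add f g hf hg => rw [add_mul, hf, hg, AddMonoidAlgebra.mapDomain_add]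
  | single a b =>
    rw [AddMonoidAlgebra.single_mul_single, mul_one, AddMonoidAlgebra.mapDomain_single]

section KerLemmas
variable {S : Type*} [AddCommMonoid S]

open scoped Classical in
theorem mem_ker_restrictHom (D : Type*) [CommRing D] (P : Set S) (h0 : (0 : S) ∉ P)
    (hP : ∀ s t : S, s + t ∈ P ↔ s ∈ P ∨ t ∈ P) (x : AddMonoidAlgebra D S) :
    x ∈ RingHom.ker (restrictHom D P h0 hP) ↔ ∀ s ∈ x.coeff.support, s ∈ P := by
  rw [RingHom.mem_ker, ← AddMonoidAlgebra.coeff_inj, AddMonoidAlgebra.coeff_zero, Finsupp.ext_iff]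
  constructor
  · intro h s hs
    have hx := h s
    rw [restrictHom_apply, Finsupp.zero_apply] at hx
    by_contra hsP
    rw [if_neg hsP] at hx
    exact Finsupp.mem_support_iff.mp hs hx
  · intro h s
    rw [restrictHom_apply, Finsupp.zero_apply]
    split_ifs with hsP
    · rfl
    · by_contra hx
      exact hsP (h s (Finsupp.mem_support_iff.mpr hx))

/-- Reduction of coefficients mod an ideal, as a ring hom. -/
noncomputable def coeffKillHom {D : Type*} [CommRing D] (P : Ideal D) (S : Type*)
    [AddCommMonoid S] : AddMonoidAlgebra D S →+* AddMonoidAlgebra (D ⧸ P) S :=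
  AddMonoidAlgebra.liftNCRingHom (AddMonoidAlgebra.singleZeroRingHom.comp (Ideal.Quotient.mk P))
    (AddMonoidAlgebra.of _ S) (fun {_ _} => Commute.all _ _)

theorem mem_ker_coeffKillHom {D : Type*} [CommRing D] (P : Ideal D)
    (x : AddMonoidAlgebra D S) :
    x ∈ RingHom.ker (coeffKillHom P S) ↔ ∀ s, x.coeff s ∈ P := by
  rw [RingHom.mem_ker]
  have h1 : coeffKillHom P S x
      = AddMonoidAlgebra.ofCoeff (Finsupp.mapRange (Ideal.Quotient.mk P) (map_zero _) x.coeff) :=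
        liftNC_eq_mapRange _ x
  rw [h1, ← AddMonoidAlgebra.coeff_inj, AddMonoidAlgebra.coeff_ofCoeff,
    AddMonoidAlgebra.coeff_zero, Finsupp.ext_iff]
  apply forall_congr'
  intro s
  rw [Finsupp.mapRange_apply, Finsupp.zero_apply]
  exact Ideal.Quotient.eq_zero_iff_mem

end KerLemmas

/-- For a domain `D` with quotient field `K` and a torsion-free monoid `S`
with quotient group `G`: (1) `D` is `S`-UMT iff `D` is `G`-UMT; (2) `S` is `D`-UMT iff
`S` is `K`-UMT. -/
theorem isDomainUMT_iff_and_isMonoidUMT_iff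
    {D S G : Type*} [CommRing D] [IsDomain D] [AddCancelCommMonoid S] [AddCommGroup G]
    (hS : AddTorsionFree S) (φ : S →+ G) (hφ : IsQuotientGroup φ) :
    (IsDomainUMT D S ↔ IsDomainUMT D G) ∧
    (IsMonoidUMT D S ↔ IsMonoidUMT (FractionRing D) S) := by
  classical
  obtain ⟨hφinj, hφsurj⟩ := hφ
  set K := FractionRing D
  -- `G` is torsion-free
  have hGt : ∀ n : ℕ, n ≠ 0 → ∀ g : G, n • g = 0 → g = 0 := by
    intro n hn g hg
    obtain ⟨s, t, rfl⟩ := hφsurj g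
    have h1 : n • φ s = n • φ t := by
      have := sub_eq_zero.mp (by simpa [smul_sub] using hg)
      exact this
    have h2 : φ (n • s) = φ (n • t) := by rw [map_nsmul, map_nsmul]; exact h1
    rw [hS n hn s t (hφinj h2), sub_self]
  haveI hUG : UniqueSums G := uniqueSums_of_torsionfree hGt
  haveI hUS : UniqueSums S := UniqueSums.of_injective_addHom φ.toAddHom hφinj hUG
  haveI : IsDomain (AddMonoidAlgebra D S) := NoZeroDivisors.to_isDomain _
  haveI : IsDomain (AddMonoidAlgebra D G) := NoZeroDivisors.to_isDomain _
  haveI : IsDomain (AddMonoidAlgebra K S) := NoZeroDivisors.to_isDomain _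
  constructor
  · -- Part 1 : `D` is `S`-UMT iff `D` is `G`-UMT
    set f := expEmbed D φ with hf
    have hfapp : ∀ x : AddMonoidAlgebra D S, f x = AddMonoidAlgebra.mapDomain φ x := fun x => rfl
    have hfapp' : ∀ x : AddMonoidAlgebra D S, (f x).coeff = Finsupp.mapDomain φ x.coeff :=
      fun x => rfl
    have hfinj : Function.Injective f := fun x y h => AddMonoidAlgebra.mapDomain_injective hφinj h
    have hmon : ∀ s : S, IsUnit (f (AddMonoidAlgebra.single s (1 : D))) := by
      intro s
      rw [hfapp, AddMonoidAlgebra.mapDomain_single]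
      refine IsUnit.of_mul_eq_one (AddMonoidAlgebra.single (-φ s) 1) ?_
      rw [AddMonoidAlgebra.single_mul_single, add_neg_cancel, mul_one]
      exact AddMonoidAlgebra.one_def.symm
    have hpre : ∀ y : AddMonoidAlgebra D G, (∀ g ∈ y.coeff.support, g ∈ Set.range φ) →
        ∃ r : AddMonoidAlgebra D S, f r = y := by
      intro y hy
      refine ⟨AddMonoidAlgebra.comapDomain φ hφinj y, ?_⟩
      rw [hfapp]
      exact AddMonoidAlgebra.mapDomain_comapDomain hy hφinj
    have hfsurj : ∀ x : AddMonoidAlgebra D G,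
        ∃ r : AddMonoidAlgebra D S, ∃ m : AddMonoidAlgebra D S,
          IsUnit (f m) ∧ x * f m = f r := by
      intro x
      choose sfun tfun hst using hφsurj
      set t0 : S := ∑ g ∈ x.coeff.support, tfun g with ht0
      have hy : ∀ g' ∈ (x * f (AddMonoidAlgebra.single t0 (1 : D))).coeff.support,
          g' ∈ Set.range φ := by
        intro g' hg'
        rw [hfapp, AddMonoidAlgebra.mapDomain_single, mul_single_one_eq_mapDomain] at hg'
        obtain ⟨g, hg, rfl⟩ := Finset.mem_image.mp (Finsupp.mapDomain_support hg')
        refine ⟨sfun g + ∑ h ∈ x.coeff.support.erase g, tfun h, ?_⟩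
        have hsplit : φ t0 = φ (tfun g) + φ (∑ h ∈ x.coeff.support.erase g, tfun h) := by
          rw [← map_add, Finset.add_sum_erase _ _ hg]
        have hkey : φ (sfun g + ∑ h ∈ x.coeff.support.erase g, tfun h)
            = (φ (sfun g) - φ (tfun g))
              + (φ (tfun g) + φ (∑ h ∈ x.coeff.support.erase g, tfun h)) := by
          rw [map_add]; abel
        rw [hkey, ← hst g, ← hsplit]
      obtain ⟨r, hr⟩ := hpre _ hy
      exact ⟨r, AddMonoidAlgebra.single t0 1, hmon t0, hr.symm⟩
    -- the two kernels
    have main : ∀ P : Ideal D, P.IsPrime → P ≠ ⊥ →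
        (RingHom.ker (coeffKillHom P S) : Set (AddMonoidAlgebra D S)) = coeffIn S P ∧
        (RingHom.ker (coeffKillHom P G) : Set (AddMonoidAlgebra D G)) = coeffIn G P ∧
        (RingHom.ker (coeffKillHom P G)).comap f = RingHom.ker (coeffKillHom P S) ∧
        (RingHom.ker (coeffKillHom P S)).IsPrime ∧ (RingHom.ker (coeffKillHom P G)).IsPrime ∧
        RingHom.ker (coeffKillHom P S) ≠ ⊥ ∧ RingHom.ker (coeffKillHom P G) ≠ ⊥ := by
      intro P hPp hPb
      haveI := hPp
      haveI : IsDomain (AddMonoidAlgebra (D ⧸ P) S) := NoZeroDivisors.to_isDomain _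
      haveI : IsDomain (AddMonoidAlgebra (D ⧸ P) G) := NoZeroDivisors.to_isDomain _
      obtain ⟨p, hpP, hp0⟩ := Submodule.exists_mem_ne_zero_of_ne_bot hPb
      refine ⟨Set.ext fun x => mem_ker_coeffKillHom P x,
        Set.ext fun x => mem_ker_coeffKillHom P x, ?_, RingHom.ker_isPrime _,
        RingHom.ker_isPrime _, ?_, ?_⟩
      · ext x
        rw [Ideal.mem_comap, mem_ker_coeffKillHom, mem_ker_coeffKillHom]
        constructor
        · intro h s
          have := h (φ s)
          rwa [hfapp', Finsupp.mapDomain_apply hφinj] at this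
        · intro h g
          rw [hfapp']
          by_cases hg : g ∈ Set.range φ
          · obtain ⟨s, rfl⟩ := hg
            rw [Finsupp.mapDomain_apply hφinj]
            exact h s
          · rw [Finsupp.mapDomain_notin_range _ _ hg]
            exact P.zero_mem
      · rw [Submodule.ne_bot_iff]
        refine ⟨AddMonoidAlgebra.single 0 p, ?_, fun hc => hp0 (AddMonoidAlgebra.single_eq_zero.mp hc)⟩
        rw [mem_ker_coeffKillHom]
        intro s
        rw [AddMonoidAlgebra.coeff_single, Finsupp.single_apply]
        split_ifs
        · exact hpP
        · exact P.zero_mem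
      · rw [Submodule.ne_bot_iff]
        refine ⟨AddMonoidAlgebra.single 0 p, ?_, fun hc => hp0 (AddMonoidAlgebra.single_eq_zero.mp hc)⟩
        rw [mem_ker_coeffKillHom]
        intro s
        rw [AddMonoidAlgebra.coeff_single, Finsupp.single_apply]
        split_ifs
        · exact hpP
        · exact P.zero_mem
    constructor
    · intro h P hP1
      obtain ⟨hset, hsetG, hcomap, hprS, hprG, hneS, hneG⟩ := main P hP1.1 hP1.2.1
      obtain ⟨Q, hQset, hQ1⟩ := h P hP1
      have hQ : Q = RingHom.ker (coeffKillHom P S) :=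
        SetLike.coe_injective (hQset.trans hset.symm)
      refine ⟨RingHom.ker (coeffKillHom P G), hsetG, ?_⟩
      exact (aux_heightOne_iff f hfinj hfsurj _ _ hcomap hprS hprG hneS hneG).mp (hQ ▸ hQ1)
    · intro h P hP1
      obtain ⟨hset, hsetG, hcomap, hprS, hprG, hneS, hneG⟩ := main P hP1.1 hP1.2.1
      obtain ⟨Q, hQset, hQ1⟩ := h P hP1
      have hQ : Q = RingHom.ker (coeffKillHom P G) :=
        SetLike.coe_injective (hQset.trans hsetG.symm)
      refine ⟨RingHom.ker (coeffKillHom P S), hset, ?_⟩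
      exact (aux_heightOne_iff f hfinj hfsurj _ _ hcomap hprS hprG hneS hneG).mpr (hQ ▸ hQ1)
  · -- Part 2 : `S` is `D`-UMT iff `S` is `K`-UMT
    set f := coeffEmbed D S with hf
    have hfapp : ∀ x : AddMonoidAlgebra D S,
        f x = AddMonoidAlgebra.ofCoeff (Finsupp.mapRange (algebraMap D K) (map_zero _) x.coeff) :=
      fun x => liftNC_eq_mapRange _ x
    have halginj : Function.Injective (algebraMap D K) := IsFractionRing.injective D K
    have hfinj : Function.Injective f := by
      intro x y h
      rw [hfapp, hfapp] at h
      apply AddMonoidAlgebra.coeff_injective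
      ext s
      have := Finsupp.ext_iff.mp (AddMonoidAlgebra.ofCoeff_injective h) s
      rw [Finsupp.mapRange_apply, Finsupp.mapRange_apply] at this
      exact halginj this
    have hconst : ∀ d : D, d ≠ 0 → IsUnit (f (AddMonoidAlgebra.single 0 d)) := by
      intro d hd
      rw [hfapp, AddMonoidAlgebra.coeff_single, Finsupp.mapRange_single,
        AddMonoidAlgebra.ofCoeff_single]
      have hd' : algebraMap D K d ≠ 0 := fun hc => hd (halginj (by rw [hc, map_zero]))
      refine IsUnit.of_mul_eq_one (AddMonoidAlgebra.single 0 (algebraMap D K d)⁻¹) ?_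
      rw [AddMonoidAlgebra.single_mul_single, add_zero, mul_inv_cancel₀ hd']
      exact AddMonoidAlgebra.one_def.symm
    have hfsurj : ∀ x : AddMonoidAlgebra K S,
        ∃ r : AddMonoidAlgebra D S, ∃ m : AddMonoidAlgebra D S,
          IsUnit (f m) ∧ x * f m = f r := by
      intro x
      induction x using AddMonoidAlgebra.induction_linear with
      | zero =>
        refine ⟨0, AddMonoidAlgebra.single 0 1, hconst 1 one_ne_zero, by simp⟩
      | add p q hp hq =>
        obtain ⟨r1, m1, hm1, e1⟩ := hp
        obtain ⟨r2, m2, hm2, e2⟩ := hq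
        refine ⟨r1 * m2 + r2 * m1, m1 * m2, by simpa [map_mul] using hm1.mul hm2, ?_⟩
        have key : ∀ a b u v : AddMonoidAlgebra K S,
            (a + b) * (u * v) = a * u * v + b * v * u := by intros; ring
        rw [map_mul, map_add, map_mul, map_mul, key p q (f m1) (f m2), e1, e2]
      | single a k =>
        obtain ⟨⟨n, d⟩, hnd⟩ := IsLocalization.surj (nonZeroDivisors D) k
        have hd0 : (d : D) ≠ 0 := nonZeroDivisors.coe_ne_zero d
        refine ⟨AddMonoidAlgebra.single a n, AddMonoidAlgebra.single 0 (d : D),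
          hconst _ hd0, ?_⟩
        have h1 : f (AddMonoidAlgebra.single 0 (d : D))
            = AddMonoidAlgebra.single (0 : S) (algebraMap D K (d : D)) := by
          rw [hfapp, AddMonoidAlgebra.coeff_single, Finsupp.mapRange_single,
            AddMonoidAlgebra.ofCoeff_single]
        have h2 : f (AddMonoidAlgebra.single a n)
            = AddMonoidAlgebra.single a (algebraMap D K n) := by
          rw [hfapp, AddMonoidAlgebra.coeff_single, Finsupp.mapRange_single,
            AddMonoidAlgebra.ofCoeff_single]
        rw [h1, h2, AddMonoidAlgebra.single_mul_single, add_zero, hnd]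
    -- the prime monoid ideal data
    have main : ∀ P : Set S, IsMinMonoidPrime P →
        ∃ h0 : (0 : S) ∉ P, ∃ hPc : ∀ s t : S, s + t ∈ P ↔ s ∈ P ∨ t ∈ P,
        (RingHom.ker (restrictHom D P h0 hPc) : Set (AddMonoidAlgebra D S)) = expIn D P ∧
        (RingHom.ker (restrictHom K P h0 hPc) : Set (AddMonoidAlgebra K S)) = expIn K P ∧
        (RingHom.ker (restrictHom K P h0 hPc)).comap f = RingHom.ker (restrictHom D P h0 hPc) ∧
        (RingHom.ker (restrictHom D P h0 hPc)).IsPrime ∧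
        (RingHom.ker (restrictHom K P h0 hPc)).IsPrime ∧
        RingHom.ker (restrictHom D P h0 hPc) ≠ ⊥ ∧
        RingHom.ker (restrictHom K P h0 hPc) ≠ ⊥ := by
      rintro P ⟨⟨⟨hPne, hPideal⟩, hPuniv, hPprime⟩, -⟩
      have h0 : (0 : S) ∉ P := by
        intro h0P
        apply hPuniv
        ext s
        simp only [Set.mem_univ, iff_true]
        simpa using hPideal 0 h0P s
      have hPc : ∀ s t : S, s + t ∈ P ↔ s ∈ P ∨ t ∈ P := by
        intro s t
        constructor
        · exact hPprime s t
        · rintro (hs | ht)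
          · exact hPideal s hs t
          · rw [add_comm]; exact hPideal t ht s
      obtain ⟨p, hpP⟩ := hPne
      refine ⟨h0, hPc, Set.ext fun x => mem_ker_restrictHom D P h0 hPc x,
        Set.ext fun x => mem_ker_restrictHom K P h0 hPc x, ?_,
        RingHom.ker_isPrime _, RingHom.ker_isPrime _, ?_, ?_⟩
      · ext x
        rw [Ideal.mem_comap, mem_ker_restrictHom, mem_ker_restrictHom]
        have hsupp : ∀ s : S, s ∈ (f x).coeff.support ↔ s ∈ x.coeff.support := by
          intro s
          rw [hfapp, AddMonoidAlgebra.coeff_ofCoeff, Finsupp.mem_support_iff, Finsupp.mapRange_apply,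
            Finsupp.mem_support_iff]
          constructor
          · intro hh hc
            exact hh (by rw [hc, map_zero])
          · intro hh hc
            exact hh (halginj (by rw [hc, map_zero]))
        constructor
        · intro h s hs
          exact h s ((hsupp s).mpr hs)
        · intro h s hs
          exact h s ((hsupp s).mp hs)
      · rw [Submodule.ne_bot_iff]
        refine ⟨AddMonoidAlgebra.single p 1, ?_, fun hc => one_ne_zero (AddMonoidAlgebra.single_eq_zero.mp hc)⟩
        rw [mem_ker_restrictHom]
        intro s hs
        rw [AddMonoidAlgebra.coeff_single, Finsupp.support_single_ne_zero p one_ne_zero, Finset.mem_singleton] at hs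
        exact hs ▸ hpP
      · rw [Submodule.ne_bot_iff]
        refine ⟨AddMonoidAlgebra.single p 1, ?_, fun hc => one_ne_zero (AddMonoidAlgebra.single_eq_zero.mp hc)⟩
        rw [mem_ker_restrictHom]
        intro s hs
        rw [AddMonoidAlgebra.coeff_single, Finsupp.support_single_ne_zero p one_ne_zero, Finset.mem_singleton] at hs
        exact hs ▸ hpP
    constructor
    · intro h P hP1
      obtain ⟨h0, hPc, hset, hsetK, hcomap, hprS, hprK, hneS, hneK⟩ := main P hP1
      obtain ⟨Q, hQset, hQ1⟩ := h P hP1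
      have hQ : Q = RingHom.ker (restrictHom D P h0 hPc) :=
        SetLike.coe_injective (hQset.trans hset.symm)
      refine ⟨RingHom.ker (restrictHom K P h0 hPc), hsetK, ?_⟩
      exact (aux_heightOne_iff f hfinj hfsurj _ _ hcomap hprS hprK hneS hneK).mp (hQ ▸ hQ1)
    · intro h P hP1
      obtain ⟨h0, hPc, hset, hsetK, hcomap, hprS, hprK, hneS, hneK⟩ := main P hP1
      obtain ⟨Q, hQset, hQ1⟩ := h P hP1
      have hQ : Q = RingHom.ker (restrictHom K P h0 hPc) :=
        SetLike.coe_injective (hQset.trans hsetK.symm)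
      refine ⟨RingHom.ker (restrictHom D P h0 hPc), hset, ?_⟩
      exact (aux_heightOne_iff f hfinj hfsurj _ _ hcomap hprS hprK hneS hneK).mpr (hQ ▸ hQ1)
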